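/- Let $(h_k)_{k\ge 1}$ be defined by $h_1 = 1$ and $h_k = \sum_{l=1}^{k-1} h_l h_{k-l}$ for $k \ge 2$. Suppose $\theta > 0$, $r > 0$, and $k \ge 2$ are such that $h_l \le \theta r^l / l^2$ for all $1 \le l \le k$, and $\theta \varrho_k \le 1$ where $\varrho_k = 2\big( (k+1)^2/k^2 + (k^2 + 2k\ln k - 1)/(k(k+1)) \big)$. Then $h_{k+1} \le \theta r^{k+1}/(k+1)^2$. -/

import Mathlib

open Finset Real

lemma refl_sum (k : ℕ) (g : ℕ → ℝ) :
    ∑ i ∈ range k, g (k - i) = ∑ i ∈ range k, g (i + 1) := by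
  rw [← Finset.sum_range_reflect (fun j => g (j + 1)) k]
  refine Finset.sum_congr rfl fun j hj => ?_
  rw [Finset.mem_range] at hj
  congr 1
  omega

lemma sumA : ∀ k : ℕ, 1 ≤ k → ∑ i ∈ range k, (1:ℝ)/((i:ℝ)+1)^2 ≤ 2 - 1/(k:ℝ) := by
  intro k hk
  induction k with
  | zero => omega
  | succ n ih =>
    rcases Nat.eq_zero_or_pos n with h | h
    · subst h; norm_num
    · have hbd := ih h
      rw [Finset.sum_range_succ]
      have hn0 : (1:ℝ) ≤ (n:ℝ) := by exact_mod_cast h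
      have step : (1:ℝ)/((n:ℝ)+1)^2 + 1/((n:ℝ)+1) ≤ 1/(n:ℝ) := by
        rw [div_add_div _ _ (by positivity) (by positivity),
          div_le_div_iff₀ (by positivity) (by positivity)]
        nlinarith
      push_cast
      linarith

lemma sumB : ∀ k : ℕ, 1 ≤ k → ∑ i ∈ range k, (1:ℝ)/((i:ℝ)+1) ≤ 1 + Real.log k := by
  intro k hk
  induction k with
  | zero => omega
  | succ n ih =>
    rcases Nat.eq_zero_or_pos n with h | h
    · subst h; norm_num
    · have hbd := ih h
      rw [Finset.sum_range_succ]
      have hn0 : (1:ℝ) ≤ (n:ℝ) := by exact_mod_cast h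
      have hlog := Real.log_le_sub_one_of_pos (x := (n:ℝ)/((n:ℝ)+1)) (by positivity)
      rw [Real.log_div (by positivity) (by positivity)] at hlog
      have heq : (n:ℝ)/((n:ℝ)+1) - 1 = -(1/((n:ℝ)+1)) := by field_simp; ring
      push_cast
      linarith [heq ▸ hlog]

lemma term_id (a b c : ℝ) (ha : 0 < a) (hb : 0 < b) (hc : a + b = c) :
    1/a^2 * (1/b^2) = 1/c^2 * (1/a^2 + 1/b^2 + 2/c * (1/a + 1/b)) := by
  subst hc
  field_simp
  ring

theorem stmt_2 (h : ℕ → ℕ) (h1 : h 1 = 1)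
    (hrec : ∀ k, 2 ≤ k → h k = ∑ l ∈ Finset.Ico 1 k, h l * h (k - l))
    (θ r : ℝ) (hθ : 0 < θ) (hr : 0 < r) (k : ℕ) (hk : 2 ≤ k)
    (hind : ∀ l, 1 ≤ l → l ≤ k → (h l : ℝ) ≤ θ * r ^ l / (l : ℝ) ^ 2)
    (hρ : θ * (2 * (((k : ℝ) + 1) ^ 2 / (k : ℝ) ^ 2 +
        ((k : ℝ) ^ 2 + 2 * (k : ℝ) * Real.log k - 1) / ((k : ℝ) * ((k : ℝ) + 1)))) ≤ 1) :
    (h (k + 1) : ℝ) ≤ θ * r ^ (k + 1) / ((k : ℝ) + 1) ^ 2 := by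
  have hK1 : (1:ℝ) ≤ (k:ℝ) := by exact_mod_cast (by omega : 1 ≤ k)
  have hK0 : (0:ℝ) < (k:ℝ) := by linarith
  have hL : 0 ≤ Real.log k := Real.log_nonneg hK1
  -- rewrite recursion as a range sum
  have hrw : (h (k+1) : ℝ) = ∑ i ∈ range k, (h (1+i) : ℝ) * (h (k-i) : ℝ) := by
    rw [hrec (k+1) (by omega), Finset.sum_Ico_eq_sum_range]
    push_cast
    refine Finset.sum_congr (by norm_num) fun i hi => ?_
    rw [Finset.mem_range] at hi
    rw [show k + 1 - (1 + i) = k - i from by omega]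
  set S : ℝ := ∑ i ∈ range k, (1/((i:ℝ)+1)^2 * (1/(((k-i : ℕ)):ℝ)^2)) with hSdef
  -- bound each term
  have hterm : ∀ i ∈ range k, (h (1+i) : ℝ) * (h (k-i) : ℝ) ≤
      θ^2 * r^(k+1) * (1/((i:ℝ)+1)^2 * (1/(((k-i : ℕ)):ℝ)^2)) := by
    intro i hi
    rw [Finset.mem_range] at hi
    have b1 := hind (1+i) (by omega) (by omega)
    have b2 := hind (k-i) (by omega) (by omega)
    have hpos1 : (0:ℝ) ≤ θ * r ^ (1+i) / ((1+i : ℕ) : ℝ)^2 := by positivity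
    have hnn : (0:ℝ) ≤ (h (k-i) : ℝ) := by positivity
    calc (h (1+i) : ℝ) * (h (k-i) : ℝ)
        ≤ (θ * r ^ (1+i) / ((1+i : ℕ) : ℝ)^2) * (θ * r ^ (k-i) / ((k-i : ℕ) : ℝ)^2) :=
          mul_le_mul b1 b2 hnn hpos1
      _ = θ^2 * r^(k+1) * (1/((i:ℝ)+1)^2 * (1/(((k-i : ℕ)):ℝ)^2)) := by
          rw [show k + 1 = (1+i)+(k-i) from by omega, pow_add]
          push_cast
          ring
  have hsum : (h (k+1) : ℝ) ≤ θ^2 * r^(k+1) * S := by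
    rw [hrw, hSdef, Finset.mul_sum]
    exact Finset.sum_le_sum hterm
  -- sum identity
  have htid : ∀ i ∈ range k, 1/((i:ℝ)+1)^2 * (1/(((k-i:ℕ)):ℝ)^2) =
      1/((k:ℝ)+1)^2 * (1/((i:ℝ)+1)^2 + 1/(((k-i:ℕ)):ℝ)^2 +
        2/((k:ℝ)+1) * (1/((i:ℝ)+1) + 1/(((k-i:ℕ)):ℝ))) := by
    intro i hi
    rw [Finset.mem_range] at hi
    have hb : (0:ℝ) < (((k-i:ℕ)):ℝ) := by exact_mod_cast (by omega : 0 < k - i)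
    exact term_id _ _ _ (by positivity) hb (by rw [Nat.cast_sub (by omega : i ≤ k)]; ring)
  have hSid : S = 1/((k:ℝ)+1)^2 * ((∑ i ∈ range k, 1/((i:ℝ)+1)^2 +
      ∑ i ∈ range k, 1/(((k-i:ℕ)):ℝ)^2) + 2/((k:ℝ)+1) *
      (∑ i ∈ range k, 1/((i:ℝ)+1) + ∑ i ∈ range k, 1/(((k-i:ℕ)):ℝ))) := by
    rw [hSdef, Finset.sum_congr rfl htid]
    simp only [mul_add, Finset.sum_add_distrib, ← Finset.mul_sum]
  have hA2 : ∑ i ∈ range k, (1:ℝ)/(((k-i:ℕ)):ℝ)^2 = ∑ i ∈ range k, 1/((i:ℝ)+1)^2 := by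
    have h0 : ∑ i ∈ range k, (1:ℝ)/(((k-i:ℕ)):ℝ)^2
        = ∑ i ∈ range k, (1:ℝ)/((((i+1:ℕ))):ℝ)^2 := refl_sum k (fun n => (1:ℝ)/((n:ℕ):ℝ)^2)
    rw [h0]
    push_cast
    rfl
  have hB2 : ∑ i ∈ range k, (1:ℝ)/(((k-i:ℕ)):ℝ) = ∑ i ∈ range k, 1/((i:ℝ)+1) := by
    have h0 : ∑ i ∈ range k, (1:ℝ)/(((k-i:ℕ)):ℝ)
        = ∑ i ∈ range k, (1:ℝ)/((((i+1:ℕ))):ℝ) := refl_sum k (fun n => (1:ℝ)/((n:ℕ):ℝ))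
    rw [h0]
    push_cast
    rfl
  have hA := sumA k (by omega)
  have hB := sumB k (by omega)
  have hSb : S ≤ 1/((k:ℝ)+1)^2 * (2*(2 - 1/(k:ℝ)) + 2/((k:ℝ)+1) * (2*(1 + Real.log k))) := by
    rw [hSid, hA2, hB2]
    apply mul_le_mul_of_nonneg_left _ (by positivity)
    have hc : (0:ℝ) ≤ 2/((k:ℝ)+1) := by positivity
    have h3 := mul_le_mul_of_nonneg_left
      (by linarith : (∑ i ∈ range k, (1:ℝ)/((i:ℝ)+1)) + ∑ i ∈ range k, (1:ℝ)/((i:ℝ)+1)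
        ≤ 2*(1 + Real.log k)) hc
    linarith
  -- numeric comparison with ρ
  have hk1ne : ((k:ℝ)+1) ≠ 0 := by positivity
  have hkne : ((k:ℝ)) ≠ 0 := ne_of_gt hK0
  have key : 2*(2 - 1/(k:ℝ)) + 2/((k:ℝ)+1) * (2*(1 + Real.log k)) ≤
      2 * (((k : ℝ) + 1) ^ 2 / (k : ℝ) ^ 2 +
        ((k : ℝ) ^ 2 + 2 * (k : ℝ) * Real.log k - 1) / ((k : ℝ) * ((k : ℝ) + 1))) := by
    have hdiff : 2 * (((k : ℝ) + 1) ^ 2 / (k : ℝ) ^ 2 +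
        ((k : ℝ) ^ 2 + 2 * (k : ℝ) * Real.log k - 1) / ((k : ℝ) * ((k : ℝ) + 1)))
        - (2*(2 - 1/(k:ℝ)) + 2/((k:ℝ)+1) * (2*(1 + Real.log k)))
        = 2*(3*(k:ℝ)+1)/((k:ℝ)^2*((k:ℝ)+1)) := by
      field_simp
      ring
    nlinarith [hdiff, div_nonneg (by linarith : (0:ℝ) ≤ 2*(3*(k:ℝ)+1))
      (by positivity : (0:ℝ) ≤ (k:ℝ)^2*((k:ℝ)+1))]
  have hfin : θ * S ≤ 1/((k:ℝ)+1)^2 := by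
    have h2 : θ * S ≤ θ * (1/((k:ℝ)+1)^2 * (2 * (((k : ℝ) + 1) ^ 2 / (k : ℝ) ^ 2 +
        ((k : ℝ) ^ 2 + 2 * (k : ℝ) * Real.log k - 1) / ((k : ℝ) * ((k : ℝ) + 1))))) := by
      apply mul_le_mul_of_nonneg_left _ hθ.le
      exact hSb.trans (mul_le_mul_of_nonneg_left key (by positivity))
    calc θ * S ≤ _ := h2
      _ = 1/((k:ℝ)+1)^2 * (θ * (2 * (((k : ℝ) + 1) ^ 2 / (k : ℝ) ^ 2 +
        ((k : ℝ) ^ 2 + 2 * (k : ℝ) * Real.log k - 1) / ((k : ℝ) * ((k : ℝ) + 1))))) := by ring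
      _ ≤ 1/((k:ℝ)+1)^2 * 1 := mul_le_mul_of_nonneg_left hρ (by positivity)
      _ = 1/((k:ℝ)+1)^2 := by ring
  calc (h (k+1) : ℝ) ≤ θ^2 * r^(k+1) * S := hsum
    _ = θ * r^(k+1) * (θ * S) := by ring
    _ ≤ θ * r^(k+1) * (1/((k:ℝ)+1)^2) := mul_le_mul_of_nonneg_left hfin (by positivity)
    _ = θ * r ^ (k + 1) / ((k : ℝ) + 1) ^ 2 := by ring
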